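/- Let (Ω, 𝓕, μ) be a probability space, λ > 0, and let u(x) := (1 − e^{−λx})/λ. Let X : Ω → ℝ be measurable such that ω ↦ e^{−λ X(ω)} is integrable. Then sup_{y ∈ ℝ} ( E[u(X + y)] − y ) = −(1/λ) · log E[e^{−λ X}]. That is, the OCE monetary utility for the exponential (entropy) utility equals the entropic risk-adjusted value. -/

import Mathlib

open MeasureTheory Real

/-- The OCE monetary utility of the exponential (entropy) utility
`u(x) = (1 − e^{−λx})/λ` equals the entropic risk-adjusted value
`−(1/λ)·log E[e^{−λX}]`. -/
theorem oce_entropy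
    {Ω : Type*} [MeasurableSpace Ω] (μ : Measure Ω) [IsProbabilityMeasure μ]
    (lam : ℝ) (hlam : 0 < lam)
    (u : ℝ → ℝ) (hu : ∀ x, u x = (1 - Real.exp (-lam * x)) / lam)
    (X : Ω → ℝ) (hX : Measurable X)
    (hint : Integrable (fun ω => Real.exp (-lam * X ω)) μ) :
    (⨆ y : ℝ, (∫ ω, u (X ω + y) ∂μ) - y)
      = -(1 / lam) * Real.log (∫ ω, Real.exp (-lam * X ω) ∂μ) := by
  set m : ℝ := ∫ ω, Real.exp (-lam * X ω) ∂μ with hm_def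
  have hm : 0 < m := by
    apply integral_exp_pos (f := fun ω => -lam * X ω)
    convert hint using 1
  -- value of the objective at each y
  have hval : ∀ y : ℝ, (∫ ω, u (X ω + y) ∂μ) - y
      = (1 - Real.exp (-lam * y) * m) / lam - y := by
    intro y
    have h1 : ∀ ω, u (X ω + y)
        = (1 - Real.exp (-lam * y) * Real.exp (-lam * X ω)) / lam := by
      intro ω
      rw [hu]
      rw [← Real.exp_add]
      ring_nf
    have h2 : (∫ ω, u (X ω + y) ∂μ)
        = (∫ ω, (1 - Real.exp (-lam * y) * Real.exp (-lam * X ω)) ∂μ) / lam := by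
      simp_rw [h1]
      rw [integral_div]
    rw [h2]
    rw [integral_sub (integrable_const 1) (hint.const_mul _)]
    simp only [integral_const, measure_univ, probReal_univ, ENNReal.toReal_one, smul_eq_mul, one_mul]
    rw [show (fun ω => Real.exp (-lam * y) * Real.exp (-lam * X ω)) = fun ω => Real.exp (-lam * y) * Real.exp (-lam * X ω) from rfl, integral_const_mul]
  have hc : ∀ y : ℝ, (∫ ω, u (X ω + y) ∂μ) - y ≤ -(1 / lam) * Real.log m := by
    intro y
    rw [hval y]
    set s : ℝ := -lam * y + Real.log m with hs
    have hexp : Real.exp (-lam * y) * m = Real.exp s := by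
      rw [hs, Real.exp_add, Real.exp_log hm]
    rw [hexp]
    have hle : s + 1 ≤ Real.exp s := Real.add_one_le_exp s
    have : -(1 / lam) * Real.log m - ((1 - Real.exp s) / lam - y)
        = (Real.exp s - (s + 1)) / lam := by
      rw [hs]; field_simp; ring
    nlinarith [div_nonneg (by linarith : (0:ℝ) ≤ Real.exp s - (s + 1)) hlam.le]
  have hattain : (∫ ω, u (X ω + Real.log m / lam) ∂μ) - Real.log m / lam
      = -(1 / lam) * Real.log m := by
    rw [hval]
    have : -lam * (Real.log m / lam) = -Real.log m := by field_simp
    rw [this, Real.exp_neg, Real.exp_log hm, inv_mul_cancel₀ hm.ne']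
    field_simp
    ring
  apply le_antisymm
  · exact ciSup_le hc
  · rw [← hattain]
    exact le_ciSup ⟨-(1 / lam) * Real.log m, fun x ⟨y, hy⟩ => hy ▸ hc y⟩ _
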